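/- Assume additionally ∫_𝒳 k(t,t) dμ(t) < ∞. Then for all x, y ∈ 𝒳, the function t ↦ k(x,t) k(t,y) is μ-integrable and h_μ(x,y) := ∫_𝒳 k(x,t) k(t,y) dμ(t) = ∑_{i=1}^∞ σ_i² e_i(x) e_i(y), the series converging absolutely. -/

import Mathlib

open scoped BigOperators
open MeasureTheory

/-- `k` is a (symmetric) positive definite kernel. -/
def IsPosDefKernel {𝒳 : Type*} (k : 𝒳 → 𝒳 → ℝ) : Prop :=
  (∀ x y, k x y = k y x) ∧
  ∀ (n : ℕ) (x : Fin n → 𝒳) (c : Fin n → ℝ),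
    0 ≤ ∑ a, ∑ b, c a * c b * k (x a) (x b)

/-- if `∫ k(t,t) dμ(t) < ∞`, then for all `x, y` the function
`t ↦ k(x,t)k(t,y)` is `μ`-integrable and
`h_μ(x,y) = ∫ k(x,t)k(t,y) dμ(t) = ∑_i σ_i² e_i(x) e_i(y)`, the series
converging absolutely. (0-indexed Mercer eigenpairs.) -/
theorem stmt8
    {𝒳 : Type*} [MeasurableSpace 𝒳] (μ : Measure 𝒳) [IsProbabilityMeasure μ]
    (k : 𝒳 → 𝒳 → ℝ) (hpd : IsPosDefKernel k)
    (hCS : ∀ x t, |k x t| ≤ Real.sqrt (k x x * k t t))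
    (σ : ℕ → ℝ) (e : ℕ → 𝒳 → ℝ)
    (hσmono : ∀ i j, i ≤ j → σ j ≤ σ i) (hσ0 : ∀ i, 0 ≤ σ i) (hσsum : Summable σ)
    (hemeas : ∀ i, Measurable (e i))
    (horth : ∀ i j, ∫ x, e i x * e j x ∂μ = if i = j then 1 else 0)
    (hmercer : ∀ x y, HasSum (fun i => σ i * e i x * e i y) (k x y))
    (habs : ∀ x y, Summable fun i => |σ i * e i x * e i y|)
    (hkint : Integrable (fun t => k t t) μ) :
    ∀ x y : 𝒳,
      Integrable (fun t => k x t * k t y) μ ∧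
      (Summable fun i => |σ i ^ 2 * e i x * e i y|) ∧
      (∫ t, k x t * k t y ∂μ) = ∑' i : ℕ, σ i ^ 2 * e i x * e i y := by
  obtain ⟨hsym, hpos⟩ := hpd
  -- diagonal nonnegativity
  have hdiag : ∀ t, 0 ≤ k t t := by
    intro t
    have := hpos 1 (fun _ => t) (fun _ => 1)
    simpa using this
  -- measurability of `k z ·`
  have hkmeas : ∀ z, Measurable (fun t => k z t) := by
    intro z
    apply measurable_of_tendsto_metrizable
      (f := fun n t => ∑ i ∈ Finset.range n, σ i * e i z * e i t)
    · intro n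
      exact Finset.measurable_sum _ fun i _ => (hemeas i).const_mul _
    · rw [tendsto_pi_nhds]
      intro t
      exact (hmercer z t).tendsto_sum_nat
  have hkmeas' : ∀ z, Measurable (fun t => k t z) := by
    intro z
    have : (fun t => k t z) = fun t => k z t := funext fun t => hsym t z
    rw [this]; exact hkmeas z
  -- integrability of `e i * e j`
  have heii : ∀ i, Integrable (fun t => e i t * e i t) μ := by
    intro i
    by_contra h
    have h0 := integral_undef h
    rw [horth i i] at h0
    simp at h0
  have heij : ∀ i j, Integrable (fun t => e i t * e j t) μ := by
    intro i j
    apply Integrable.mono' (g := fun t => (e i t * e i t + e j t * e j t) / 2)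
      (((heii i).add (heii j)).div_const 2)
      (((hemeas i).mul (hemeas j)).aestronglyMeasurable)
    filter_upwards with t
    simp only [Real.norm_eq_abs, Pi.mul_apply, abs_mul]
    nlinarith [sq_nonneg (|e i t| - |e j t|), sq_abs (e i t), sq_abs (e j t)]
  -- ∫ |e i * e j| ≤ 1
  have heij_abs : ∀ i j, (∫ t, |e i t * e j t| ∂μ) ≤ 1 := by
    intro i j
    have h1 : (∫ t, |e i t * e j t| ∂μ) ≤ ∫ t, (e i t * e i t + e j t * e j t) / 2 ∂μ := by
      apply integral_mono (heij i j).abs (((heii i).add (heii j)).div_const 2)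
      intro t
      simp only [Pi.add_apply]
      rw [abs_mul]
      nlinarith [sq_nonneg (|e i t| - |e j t|), sq_abs (e i t), sq_abs (e j t)]
    have h2 : (∫ t, (e i t * e i t + e j t * e j t) / 2 ∂μ) = 1 := by
      rw [integral_div, integral_add (heii i) (heii j), horth i i, horth j j]
      norm_num
    linarith
  -- summability of |σ j * e j z|
  have hsum_ez : ∀ z, Summable (fun j => |σ j * e j z|) := by
    intro z
    apply Summable.of_nonneg_of_le (fun j => abs_nonneg _) (fun j => ?_)
      ((hσsum.add (habs z z)).div_const 2)
    have h1 : |σ j * e j z| = σ j * |e j z| := by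
      rw [abs_mul, abs_of_nonneg (hσ0 j)]
    have h2 : |σ j * e j z * e j z| = σ j * (|e j z| * |e j z|) := by
      rw [abs_mul, abs_mul, abs_of_nonneg (hσ0 j)]
      ring
    rw [h1, h2]
    nlinarith [sq_nonneg (1 - |e j z|), abs_nonneg (e j z), hσ0 j]
  intro x y
  set C := Real.sqrt (k x x * k y y) with hC
  -- pointwise bound |k x t * k t y| ≤ C * k t t
  have hbound : ∀ t, |k x t * k t y| ≤ C * k t t := by
    intro t
    have h1 := hCS x t
    have h2 := hCS t y
    have : |k x t * k t y| ≤ Real.sqrt (k x x * k t t) * Real.sqrt (k t t * k y y) := by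
      rw [abs_mul]
      exact mul_le_mul h1 h2 (abs_nonneg _) (Real.sqrt_nonneg _)
    calc |k x t * k t y| ≤ Real.sqrt (k x x * k t t) * Real.sqrt (k t t * k y y) := this
      _ = Real.sqrt ((k x x * k t t) * (k t t * k y y)) :=
          (Real.sqrt_mul (mul_nonneg (hdiag x) (hdiag t)) _).symm
      _ = Real.sqrt ((k x x * k y y) * (k t t * k t t)) := by ring_nf
      _ = Real.sqrt (k x x * k y y) * Real.sqrt (k t t * k t t) :=
          Real.sqrt_mul (mul_nonneg (hdiag x) (hdiag y)) _
      _ = C * k t t := by rw [Real.sqrt_mul_self (hdiag t)]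
  -- part 1 : integrability
  have hint1 : Integrable (fun t => k x t * k t y) μ := by
    apply Integrable.mono' (g := fun t => C * k t t) (hkint.const_mul C)
      (((hkmeas x).mul (hkmeas' y)).aestronglyMeasurable)
    filter_upwards with t
    rw [Real.norm_eq_abs]
    exact hbound t
  -- part 2 : summability
  have hsum2 : Summable fun i => |σ i ^ 2 * e i x * e i y| := by
    apply Summable.of_nonneg_of_le (fun i => abs_nonneg _) (fun i => ?_)
      ((habs x y).mul_left (σ 0))
    have h1 : |σ i ^ 2 * e i x * e i y| = σ i * |σ i * e i x * e i y| := by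
      have h0 : |σ i ^ 2 * e i x * e i y| = |σ i * (σ i * e i x * e i y)| :=
        congrArg abs (by ring)
      rw [h0, abs_mul, abs_of_nonneg (hσ0 i)]
    rw [h1]
    exact mul_le_mul_of_nonneg_right (hσmono 0 i (Nat.zero_le i)) (abs_nonneg _)
  -- integrability of k(·,y)^2
  have hky2 : Integrable (fun t => k t y * k t y) μ := by
    apply Integrable.mono' (g := fun t => k y y * k t t) (hkint.const_mul _)
      (((hkmeas' y).mul (hkmeas' y)).aestronglyMeasurable)
    filter_upwards with t
    have h2 := hCS t y
    have h3 : |k t y| * |k t y| ≤ Real.sqrt (k t t * k y y) * Real.sqrt (k t t * k y y) :=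
      mul_le_mul h2 h2 (abs_nonneg _) (Real.sqrt_nonneg _)
    rw [Real.mul_self_sqrt (mul_nonneg (hdiag t) (hdiag y))] at h3
    simp only [Real.norm_eq_abs, Pi.mul_apply, abs_mul]
    nlinarith
  -- integrability of e i * k(·,y)
  have hek : ∀ i, Integrable (fun t => e i t * k t y) μ := by
    intro i
    apply Integrable.mono' (g := fun t => (e i t * e i t + k t y * k t y) / 2)
      (((heii i).add hky2).div_const 2)
      (((hemeas i).mul (hkmeas' y)).aestronglyMeasurable)
    filter_upwards with t
    simp only [Real.norm_eq_abs, Pi.mul_apply, abs_mul]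
    nlinarith [sq_nonneg (|e i t| - |k t y|), sq_abs (e i t), sq_abs (k t y)]
  -- inner exchange : ∫ e i t * k t y = σ i * e i y
  have hinner : ∀ i, (∫ t, e i t * k t y ∂μ) = σ i * e i y := by
    intro i
    have hpt : ∀ t, e i t * k t y = ∑' j, σ j * e j y * (e i t * e j t) := by
      intro t
      have h := (hmercer y t).mul_left (e i t)
      have h2 : (fun j => e i t * (σ j * e j y * e j t)) =
          fun j => σ j * e j y * (e i t * e j t) := by
        funext j; ring
      rw [h2] at h
      rw [hsym t y, ← h.tsum_eq]
    have hpt' : (fun t => e i t * k t y) =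
        fun t => ∑' j, σ j * e j y * (e i t * e j t) := funext hpt
    have hexch := integral_tsum_of_summable_integral_norm
      (F := fun j t => σ j * e j y * (e i t * e j t)) (μ := μ)
      (fun j => (heij i j).const_mul _) ?_
    · rw [hpt', ← hexch]
      have hterm : ∀ j, (∫ t, σ j * e j y * (e i t * e j t) ∂μ) =
          if j = i then σ i * e i y else 0 := by
        intro j
        rw [integral_const_mul, horth i j]
        by_cases h : i = j
        · subst h; simp
        · simp [h, Ne.symm h]
      rw [funext hterm]
      exact tsum_ite_eq i (fun _ => σ i * e i y)
    · apply Summable.of_nonneg_of_le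
        (fun j => integral_nonneg fun t => norm_nonneg _) (fun j => ?_) (hsum_ez y)
      have : (∫ t, ‖σ j * e j y * (e i t * e j t)‖ ∂μ) =
          |σ j * e j y| * ∫ t, |e i t * e j t| ∂μ := by
        simp_rw [Real.norm_eq_abs, abs_mul (σ j * e j y)]
        rw [integral_const_mul]
      rw [this]
      calc |σ j * e j y| * ∫ t, |e i t * e j t| ∂μ ≤ |σ j * e j y| * 1 :=
            mul_le_mul_of_nonneg_left (heij_abs i j) (abs_nonneg _)
        _ = |σ j * e j y| := mul_one _
  -- uniform bound M for ∫ |e i * k(·,y)|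
  set M := (1 + ∫ t, k t y * k t y ∂μ) / 2 with hM
  have hekM : ∀ i, (∫ t, |e i t * k t y| ∂μ) ≤ M := by
    intro i
    have h1 : (∫ t, |e i t * k t y| ∂μ) ≤
        ∫ t, (e i t * e i t + k t y * k t y) / 2 ∂μ := by
      apply integral_mono (hek i).abs (((heii i).add hky2).div_const 2)
      intro t
      simp only [Pi.add_apply]
      rw [abs_mul]
      nlinarith [sq_nonneg (|e i t| - |k t y|), sq_abs (e i t), sq_abs (k t y)]
    have h2 : (∫ t, (e i t * e i t + k t y * k t y) / 2 ∂μ) = M := by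
      rw [integral_div, integral_add (heii i) hky2, horth i i]
      simp [hM]
    linarith
  -- outer exchange
  have hpt : ∀ t, k x t * k t y = ∑' i, σ i * e i x * (e i t * k t y) := by
    intro t
    have h := (hmercer x t).mul_right (k t y)
    have h2 : (fun i => σ i * e i x * e i t * k t y) =
        fun i => σ i * e i x * (e i t * k t y) := by
      funext i; ring
    rw [h2] at h
    rw [← h.tsum_eq]
  have hexch := integral_tsum_of_summable_integral_norm
    (F := fun i t => σ i * e i x * (e i t * k t y)) (μ := μ)
    (fun i => (hek i).const_mul _) ?_
  · refine ⟨hint1, hsum2, ?_⟩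
    have hpt' : (fun t => k x t * k t y) =
        fun t => ∑' i, σ i * e i x * (e i t * k t y) := funext hpt
    rw [hpt', ← hexch]
    congr 1
    funext i
    rw [integral_const_mul, hinner i]
    ring
  · apply Summable.of_nonneg_of_le
      (fun i => integral_nonneg fun t => norm_nonneg _) (fun i => ?_)
      ((hsum_ez x).mul_right M)
    have : (∫ t, ‖σ i * e i x * (e i t * k t y)‖ ∂μ) =
        |σ i * e i x| * ∫ t, |e i t * k t y| ∂μ := by
      simp_rw [Real.norm_eq_abs, abs_mul (σ i * e i x)]
      rw [integral_const_mul]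
    rw [this]
    exact mul_le_mul_of_nonneg_left (hekM i) (abs_nonneg _)
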